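/- arXiv:2309.10104 — 5 statements merged into one kernel-verified Lean document; each statement's English description precedes it below -/
import Mathlib

section
/- Let (E,w,d) be an ultra triple, r a non-negative integer, C = (c_1,…,c_k) an ordered finite subset of E, and A an n-subset of E with n > k. Let (v_1,…,v_k) = proj(C → A) be a sequential projection. Then for every v ∈ A \ {v_1,…,v_k}, we have dist_r({v_1,…,v_k}, v) ≤ dist_r({c_1,…,c_k}, v). -/
open Finset

noncomputable def distR {E : Type*} [DecidableEq E] (d : E → E → ℝ) (r : ℕ)
    (C : Finset E) (v : E) : ℝ :=
  if C.card ≤ r then 0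
  else sSup {s : ℝ | ∃ A ⊆ C, A.card = C.card - r ∧ s = ∑ x ∈ A, d v x}

noncomputable def perList {E : Type*} [DecidableEq E] (w : E → ℝ) (d : E → E → ℝ)
    (r : ℕ) : List E → ℝ
  | [] => 0
  | a :: l => perList w d r l + w a + distR d r l.toFinset a

noncomputable def perR {E : Type*} [DecidableEq E] (w : E → ℝ) (d : E → E → ℝ)
    (r : ℕ) (A : Finset E) : ℝ := perList w d r A.toList

/-- `b` is a projection of `c` onto the finite set `A`. -/
def IsProj {E : Type*} [DecidableEq E] (d : E → E → ℝ) (A : Finset E) (c b : E) : Prop :=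
  (c ∈ A ∧ b = c) ∨ (c ∉ A ∧ b ∈ A ∧ ∀ x ∈ A, d c b ≤ d c x)

/-- `v` is a sequential projection of the ordered set `c` (of length `k`) onto `A`. -/
def IsSeqProj {E : Type*} [DecidableEq E] (d : E → E → ℝ) (A : Finset E)
    (k : ℕ) (c v : ℕ → E) : Prop :=
  ∀ i < k, IsProj d (A \ (Finset.range i).image v) (c i) (v i)

/-- `c` is a greedy `r`-removed `m`-permutation of `C`. -/
def IsGreedy {E : Type*} [DecidableEq E] (w : E → ℝ) (d : E → E → ℝ) (r : ℕ)
    (C : Finset E) (m : ℕ) (c : ℕ → E) : Prop :=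
  (∀ i < m, c i ∈ C) ∧ (∀ i < m, ∀ j < m, c i = c j → i = j) ∧
  ∀ i < m, ∀ x ∈ C, x ∉ (Finset.range i).image c →
    perR w d r (insert x ((Finset.range i).image c)) ≤
      perR w d r (insert (c i) ((Finset.range i).image c))

noncomputable def distF {E : Type*} [DecidableEq E] (d : E → E → ℝ)
    (f : ℕ → ℝ → ℝ) (C : Finset E) (x : E) : ℝ :=
  let l := (C.toList.map (fun c => d x c)).insertionSort (· ≤ ·)
  ∑ i ∈ Finset.range l.length, f (i + 1) (l.getD i 0)

lemma distR_mono_aux {E : Type*} [DecidableEq E] (d : E → E → ℝ) (r k : ℕ)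
    (c v : ℕ → E) (u : E)
    (hcinj : ∀ i < k, ∀ j < k, c i = c j → i = j)
    (hvinj : ∀ i < k, ∀ j < k, v i = v j → i = j)
    (hpt : ∀ i < k, d u (v i) ≤ d u (c i)) :
    distR d r ((Finset.range k).image v) u ≤ distR d r ((Finset.range k).image c) u := by
  have hcv : ((Finset.range k).image v).card = k := by
    rw [Finset.card_image_of_injOn, Finset.card_range]
    intro i hi j hj h
    simp only [Finset.coe_range, Set.mem_Iio] at hi hj
    exact hvinj i hi j hj h
  have hcc : ((Finset.range k).image c).card = k := by
    rw [Finset.card_image_of_injOn, Finset.card_range]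
    intro i hi j hj h
    simp only [Finset.coe_range, Set.mem_Iio] at hi hj
    exact hcinj i hi j hj h
  unfold distR
  rw [hcv, hcc]
  by_cases hkr : k ≤ r
  · simp [hkr]
  · rw [if_neg hkr, if_neg hkr]
    set Sc := {s : ℝ | ∃ B ⊆ (Finset.range k).image c, B.card = k - r ∧ s = ∑ x ∈ B, d u x} with hSc
    have hfin : Sc.Finite := by
      apply Set.Finite.subset (Set.finite_range
        (fun B : ((Finset.range k).image c).powersetCard (k - r) => ∑ x ∈ (B : Finset E), d u x))
      rintro s ⟨B, hB, hcard, rfl⟩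
      exact ⟨⟨B, Finset.mem_powersetCard.mpr ⟨hB, hcard⟩⟩, rfl⟩
    have hbdd : BddAbove Sc := hfin.bddAbove
    -- nonempty of left set
    obtain ⟨B0, hB0, hB0card⟩ := Finset.exists_subset_card_eq (s := (Finset.range k).image v) (n := k - r)
      (by rw [hcv]; omega)
    refine csSup_le ⟨∑ x ∈ B0, d u x, B0, hB0, hB0card, rfl⟩ ?_
    rintro s ⟨B, hB, hBcard, rfl⟩
    set I := (Finset.range k).filter (fun i => v i ∈ B) with hI
    have hBI : B = I.image v := by
      ext x
      constructor
      · intro hx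
        obtain ⟨i, hi, hix⟩ := Finset.mem_image.mp (hB hx)
        exact Finset.mem_image.mpr ⟨i, Finset.mem_filter.mpr ⟨hi, hix ▸ hx⟩, hix⟩
      · intro hx
        obtain ⟨i, hi, hix⟩ := Finset.mem_image.mp hx
        exact hix ▸ (Finset.mem_filter.mp hi).2
    have hIrange : ∀ i ∈ I, i < k := fun i hi =>
      Finset.mem_range.mp (Finset.mem_filter.mp hi).1
    have hIcard : I.card = k - r := by
      rw [hBI] at hBcard
      rw [← hBcard]
      exact (Finset.card_image_of_injOn (fun i hi j hj h =>
        hvinj i (hIrange i hi) j (hIrange j hj) h)).symm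
    have hmem : (∑ i ∈ I, d u (c i)) ∈ Sc := by
      refine ⟨I.image c, Finset.image_subset_image (Finset.filter_subset _ _),
        by rw [Finset.card_image_of_injOn (fun i hi j hj h =>
          hcinj i (hIrange i hi) j (hIrange j hj) h)]; exact hIcard, ?_⟩
      exact (Finset.sum_image (fun i hi j hj h =>
        hcinj i (hIrange i hi) j (hIrange j hj) h)).symm
    refine le_trans ?_ (le_csSup hbdd hmem)
    rw [hBI, Finset.sum_image (fun i hi j hj h => hvinj i (hIrange i hi) j (hIrange j hj) h),
]
    exact Finset.sum_le_sum (fun i hi => hpt i (hIrange i hi))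


theorem stmt2 {E : Type*} [DecidableEq E] (w : E → ℝ) (d : E → E → ℝ)
    (hsymm : ∀ a b : E, a ≠ b → d a b = d b a)
    (hultra : ∀ a b c : E, a ≠ b → a ≠ c → b ≠ c → d a b ≤ max (d a c) (d b c))
    (r k n : ℕ) (hkn : k < n) (c : ℕ → E)
    (hcinj : ∀ i < k, ∀ j < k, c i = c j → i = j)
    (A : Finset E) (hAcard : A.card = n)
    (v : ℕ → E) (hv : IsSeqProj d A k c v) :
    ∀ u ∈ A \ (Finset.range k).image v,
      distR d r ((Finset.range k).image v) u ≤ distR d r ((Finset.range k).image c) u := by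
  intro u hu
  rw [Finset.mem_sdiff] at hu
  obtain ⟨huA, hunv⟩ := hu
  have hvmem : ∀ i < k, v i ∈ A \ (Finset.range i).image v := by
    intro i hi
    rcases hv i hi with ⟨hc, he⟩ | ⟨_, hb, _⟩
    · rwa [he]
    · exact hb
  have hvinj : ∀ i < k, ∀ j < k, v i = v j → i = j := by
    intro i hi j hj hij
    by_contra hne
    rcases Nat.lt_or_ge i j with h | h
    · have := (Finset.mem_sdiff.mp (hvmem j hj)).2
      exact this (Finset.mem_image.mpr ⟨i, Finset.mem_range.mpr h, hij⟩)
    · have hji : j < i := by omega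
      have := (Finset.mem_sdiff.mp (hvmem i hi)).2
      exact this (Finset.mem_image.mpr ⟨j, Finset.mem_range.mpr hji, hij.symm⟩)
  have hpt : ∀ i < k, d u (v i) ≤ d u (c i) := by
    intro i hi
    have huS : u ∈ A \ (Finset.range i).image v := by
      rw [Finset.mem_sdiff]
      refine ⟨huA, fun h => hunv ?_⟩
      obtain ⟨j, hj, hje⟩ := Finset.mem_image.mp h
      exact Finset.mem_image.mpr ⟨j, Finset.mem_range.mpr (by
        have := Finset.mem_range.mp hj; omega), hje⟩
    have huv : u ≠ v i := by
      intro h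
      exact hunv (Finset.mem_image.mpr ⟨i, Finset.mem_range.mpr hi, h.symm⟩)
    rcases hv i hi with ⟨hc, he⟩ | ⟨hcn, hb, hmin⟩
    · rw [he]
    · have hvc : v i ≠ c i := fun h => hcn (h ▸ hb)
      have huc : u ≠ c i := fun h => hcn (h ▸ huS)
      have h1 : d (c i) (v i) ≤ d (c i) u := hmin u huS
      have h2 : d u (v i) ≤ max (d u (c i)) (d (v i) (c i)) :=
        hultra u (v i) (c i) huv huc hvc
      have h3 : d (v i) (c i) ≤ d u (c i) := by
        rw [hsymm (v i) (c i) hvc, hsymm u (c i) huc]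
        exact h1
      calc d u (v i) ≤ max (d u (c i)) (d (v i) (c i)) := h2
        _ ≤ d u (c i) := max_le le_rfl h3
  exact distR_mono_aux d r k c v u hcinj hvinj hpt
end

section
/- Let (E,w,d) be an ultra triple and r a non-negative integer. Then any two orderings (permutations) of a finite subset A ⊆ E have the same r-removed perimeter. In particular, the r-removed perimeter per_r(A) of a finite set A is well-defined. -/
open Finset

section UltraAux
variable {E : Type*} [DecidableEq E]


noncomputable def maxSum (f : E → ℝ) (n : ℕ) (C : Finset E) : ℝ :=
  sSup {s : ℝ | ∃ A ⊆ C, A.card = n ∧ s = ∑ x ∈ A, f x}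

lemma maxSum_set_eq (f : E → ℝ) (n : ℕ) (C : Finset E) :
    {s : ℝ | ∃ A ⊆ C, A.card = n ∧ s = ∑ x ∈ A, f x} =
      ↑((C.powersetCard n).image fun A => ∑ x ∈ A, f x) := by
  ext s
  simp only [Set.mem_setOf_eq, Finset.coe_image, Set.mem_image, Finset.mem_coe,
    Finset.mem_powersetCard]
  constructor
  · rintro ⟨A, hA, hc, rfl⟩; exact ⟨A, ⟨hA, hc⟩, rfl⟩
  · rintro ⟨A, ⟨hA, hc⟩, rfl⟩; exact ⟨A, hA, hc, rfl⟩

lemma maxSum_finite (f : E → ℝ) (n : ℕ) (C : Finset E) :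
    {s : ℝ | ∃ A ⊆ C, A.card = n ∧ s = ∑ x ∈ A, f x}.Finite := by
  rw [maxSum_set_eq]
  exact Finset.finite_toSet _

lemma le_maxSum (f : E → ℝ) (n : ℕ) (C A : Finset E)
    (hA : A ⊆ C) (hc : A.card = n) : ∑ x ∈ A, f x ≤ maxSum f n C :=
  le_csSup (Set.Finite.bddAbove (maxSum_finite f n C)) ⟨A, hA, hc, rfl⟩

lemma exists_maxSum (f : E → ℝ) (n : ℕ) (C : Finset E)
    (hn : n ≤ C.card) : ∃ A ⊆ C, A.card = n ∧ maxSum f n C = ∑ x ∈ A, f x := by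
  obtain ⟨A, hA, hc⟩ := Finset.exists_subset_card_eq hn
  have hm : maxSum f n C ∈ {s : ℝ | ∃ A ⊆ C, A.card = n ∧ s = ∑ x ∈ A, f x} :=
    Set.Nonempty.csSup_mem ⟨_, ⟨A, hA, hc, rfl⟩⟩ (maxSum_finite f n C)
  exact hm

lemma maxSum_zero (f : E → ℝ) (C : Finset E) : maxSum f 0 C = 0 := by
  have h : {s : ℝ | ∃ A ⊆ C, A.card = 0 ∧ s = ∑ x ∈ A, f x} = {(0 : ℝ)} := by
    ext s
    simp only [Set.mem_setOf_eq, Finset.card_eq_zero, Set.mem_singleton_iff]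
    constructor
    · rintro ⟨A, -, rfl, rfl⟩; simp
    · rintro rfl; exact ⟨∅, Finset.empty_subset _, rfl, by simp⟩
  rw [maxSum, h, csSup_singleton]


lemma distR_eq_maxSum (d : E → E → ℝ) (r : ℕ) (C : Finset E) (v : E) :
    distR d r C v = maxSum (d v) (C.card - r) C := by
  rw [distR]
  split_ifs with h
  · rw [Nat.sub_eq_zero_of_le h, maxSum_zero]
  · rfl

lemma maxSum_insert_low (f : E → ℝ) (C : Finset E) (a : E) (ha : a ∉ C) (t : ℝ)
    (hfa : f a = t) (m : ℕ) (hm : m ≤ C.card)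
    (hfil : (C.filter fun x => t < f x).card ≤ m) :
    maxSum f (m + 1) (insert a C) = t + maxSum f m C := by
  apply le_antisymm
  · obtain ⟨B, hB, hBc, hBe⟩ := exists_maxSum f (m + 1) (insert a C)
      (by rw [Finset.card_insert_of_notMem ha]; omega)
    rw [hBe]
    by_cases haB : a ∈ B
    · have hsub : B.erase a ⊆ C := by
        intro x hx
        rcases Finset.mem_insert.1 (hB (Finset.mem_of_mem_erase hx)) with h | h
        · exact absurd h (Finset.ne_of_mem_erase hx)
        · exact h
      rw [← Finset.add_sum_erase _ f haB, hfa]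
      have hcard : (B.erase a).card = m := by rw [Finset.card_erase_of_mem haB, hBc]; omega
      exact add_le_add_right (le_maxSum f m C _ hsub hcard) _
    · have hBC : B ⊆ C := by
        intro x hx
        rcases Finset.mem_insert.1 (hB hx) with h | h
        · exact absurd (h ▸ hx) haB
        · exact h
      have hex : ∃ x ∈ B, ¬ t < f x := by
        by_contra hcon
        push_neg at hcon
        have hsub : B ⊆ C.filter fun x => t < f x :=
          fun x hx => Finset.mem_filter.2 ⟨hBC hx, hcon x hx⟩
        have := Finset.card_le_card hsub
        omega
      obtain ⟨x, hxB, hxle⟩ := hex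
      push_neg at hxle
      rw [← Finset.add_sum_erase _ f hxB]
      have hcard : (B.erase x).card = m := by rw [Finset.card_erase_of_mem hxB, hBc]; omega
      exact add_le_add hxle (le_maxSum f m C _ ((Finset.erase_subset _ _).trans hBC) hcard)
  · obtain ⟨B, hB, hBc, hBe⟩ := exists_maxSum f m C hm
    rw [hBe]
    have haB : a ∉ B := fun h => ha (hB h)
    have hins : t + ∑ x ∈ B, f x = ∑ x ∈ insert a B, f x := by
      rw [Finset.sum_insert haB, hfa]
    rw [hins]
    exact le_maxSum f (m + 1) (insert a C) _ (Finset.insert_subset_insert a hB)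
      (by rw [Finset.card_insert_of_notMem haB, hBc])

lemma maxSum_insert_high (f : E → ℝ) (C : Finset E) (a : E) (ha : a ∉ C) (t : ℝ)
    (hfa : f a = t) (m : ℕ)
    (hfil : m + 1 ≤ (C.filter fun x => t < f x).card) :
    maxSum f (m + 1) (insert a C) = maxSum f (m + 1) C := by
  have hm : m + 1 ≤ C.card := hfil.trans (Finset.card_le_card (Finset.filter_subset _ _))
  apply le_antisymm
  · obtain ⟨B, hB, hBc, hBe⟩ := exists_maxSum f (m + 1) (insert a C)
      (by rw [Finset.card_insert_of_notMem ha]; omega)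
    rw [hBe]
    by_cases haB : a ∈ B
    · have hB'C : B.erase a ⊆ C := by
        intro x hx
        rcases Finset.mem_insert.1 (hB (Finset.mem_of_mem_erase hx)) with h | h
        · exact absurd h (Finset.ne_of_mem_erase hx)
        · exact h
      have hB'c : (B.erase a).card = m := by rw [Finset.card_erase_of_mem haB, hBc]; omega
      have hex : ∃ x ∈ C.filter (fun x => t < f x), x ∉ B.erase a := by
        by_contra hcon
        push_neg at hcon
        have := Finset.card_le_card (fun x hx => hcon x hx)
        omega
      obtain ⟨x, hxf, hxB'⟩ := hex
      rw [Finset.mem_filter] at hxf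
      calc ∑ y ∈ B, f y = f a + ∑ y ∈ B.erase a, f y := (Finset.add_sum_erase _ f haB).symm
        _ ≤ f x + ∑ y ∈ B.erase a, f y := by
            rw [hfa]; exact add_le_add_left (le_of_lt hxf.2) _
        _ = ∑ y ∈ insert x (B.erase a), f y := (Finset.sum_insert hxB').symm
        _ ≤ maxSum f (m + 1) C := le_maxSum _ _ _ _ (Finset.insert_subset hxf.1 hB'C)
            (by rw [Finset.card_insert_of_notMem hxB', hB'c])
    · have hBC : B ⊆ C := by
        intro x hx
        rcases Finset.mem_insert.1 (hB hx) with h | h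
        · exact absurd (h ▸ hx) haB
        · exact h
      exact le_maxSum f (m + 1) C B hBC hBc
  · obtain ⟨B, hB, hBc, hBe⟩ := exists_maxSum f (m + 1) C hm
    rw [hBe]
    exact le_maxSum f (m + 1) (insert a C) B (hB.trans (Finset.subset_insert a C)) hBc

lemma maxSum_eq_filter (F : E → ℝ) (t : ℝ) (C : Finset E) (n : ℕ)
    (hn : n ≤ (C.filter fun x => t < F x).card) :
    maxSum F n C = maxSum F n (C.filter fun x => t < F x) := by
  set H := C.filter fun x => t < F x with hHdef
  have hHC : H ⊆ C := Finset.filter_subset _ _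
  apply le_antisymm
  · obtain ⟨B, hB, hBc, hBe⟩ := exists_maxSum F n C (hn.trans (Finset.card_le_card hHC))
    rw [hBe]
    have h1 : (B ∩ H).card + (B \ H).card = n := by
      rw [Finset.card_inter_add_card_sdiff, hBc]
    have h2 : (B ∩ H).card + (H \ B).card = H.card := by
      rw [Finset.inter_comm]
      exact Finset.card_inter_add_card_sdiff _ _
    have hcard : (B \ H).card ≤ (H \ B).card := by omega
    obtain ⟨T, hT, hTc⟩ := Finset.exists_subset_card_eq hcard
    have hdisj : Disjoint (B ∩ H) T := by
      rw [Finset.disjoint_left]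
      intro x hx hxT
      exact (Finset.mem_sdiff.1 (hT hxT)).2 (Finset.mem_inter.1 hx).1
    have hB'H : (B ∩ H) ∪ T ⊆ H :=
      Finset.union_subset Finset.inter_subset_right (hT.trans (Finset.sdiff_subset))
    have hB'c : ((B ∩ H) ∪ T).card = n := by
      rw [Finset.card_union_of_disjoint hdisj, hTc]; omega
    have h3 : ∑ x ∈ B \ H, F x ≤ ((B \ H).card : ℝ) * t := by
      rw [← nsmul_eq_mul]
      apply Finset.sum_le_card_nsmul
      intro x hx
      rw [Finset.mem_sdiff] at hx
      by_contra hcon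
      push_neg at hcon
      exact hx.2 (Finset.mem_filter.2 ⟨hB hx.1, hcon⟩)
    have h4 : ((T.card : ℝ)) * t ≤ ∑ x ∈ T, F x := by
      rw [← nsmul_eq_mul]
      apply Finset.card_nsmul_le_sum
      intro x hx
      exact le_of_lt (Finset.mem_filter.1 (Finset.mem_sdiff.1 (hT hx)).1).2
    have hkey : ∑ x ∈ B, F x ≤ ∑ x ∈ (B ∩ H) ∪ T, F x := by
      rw [Finset.sum_union hdisj, ← Finset.sum_inter_add_sum_sdiff B H F]
      rw [← hTc] at h3
      linarith
    exact hkey.trans (le_maxSum F n H _ hB'H hB'c)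
  · obtain ⟨B, hB, hBc, hBe⟩ := exists_maxSum F n H hn
    rw [hBe]
    exact le_maxSum F n C B (hB.trans hHC) hBc

lemma maxSum_congr_filter (F G : E → ℝ) (t : ℝ) (C : Finset E) (n : ℕ)
    (hH : C.filter (fun x => t < F x) = C.filter (fun x => t < G x))
    (heq : ∀ x ∈ C, t < F x → F x = G x)
    (hn : n ≤ (C.filter fun x => t < F x).card) :
    maxSum F n C = maxSum G n C := by
  have h1 : maxSum F n C = maxSum F n (C.filter fun x => t < F x) :=
    maxSum_eq_filter F t C n hn
  have h2 : maxSum G n C = maxSum G n (C.filter fun x => t < G x) :=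
    maxSum_eq_filter G t C n (by rw [← hH]; exact hn)
  have h3 : maxSum F n (C.filter fun x => t < F x) = maxSum G n (C.filter fun x => t < F x) := by
    unfold maxSum
    congr 1
    ext s
    simp only [Set.mem_setOf_eq]
    have hsum : ∀ A ⊆ C.filter (fun x => t < F x), ∑ x ∈ A, F x = ∑ x ∈ A, G x := by
      intro A hA
      apply Finset.sum_congr rfl
      intro x hx
      have := Finset.mem_filter.1 (hA hx)
      exact heq x this.1 this.2
    constructor
    · rintro ⟨A, hA, hc, rfl⟩; exact ⟨A, hA, hc, hsum A hA⟩
    · rintro ⟨A, hA, hc, rfl⟩; exact ⟨A, hA, hc, (hsum A hA).symm⟩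
  rw [h1, h3, h2, ← hH]

lemma ultra_eq (d : E → E → ℝ)
    (hsymm : ∀ a b : E, a ≠ b → d a b = d b a)
    (hultra : ∀ a b c : E, a ≠ b → a ≠ c → b ≠ c → d a b ≤ max (d a c) (d b c))
    (a b x : E) (hab : a ≠ b) (hax : a ≠ x) (hbx : b ≠ x)
    (hlt : d a b < d a x) : d a x = d b x := by
  have h1 : d b x ≤ max (d b a) (d x a) := hultra b x a hbx (Ne.symm hab) (Ne.symm hax)
  have h2 : d a x ≤ max (d a b) (d x b) := hultra a x b hax hab (Ne.symm hbx)
  rw [hsymm x a (Ne.symm hax), hsymm b a (Ne.symm hab)] at h1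
  rw [hsymm x b (Ne.symm hbx)] at h2
  have hba : d b x ≤ d a x := h1.trans (max_le (le_of_lt hlt) le_rfl)
  have hab' : d a x ≤ d b x := by
    rcases le_max_iff.1 h2 with h | h
    · linarith
    · exact h
  linarith

lemma distR_swap (d : E → E → ℝ)
    (hsymm : ∀ a b : E, a ≠ b → d a b = d b a)
    (hultra : ∀ a b c : E, a ≠ b → a ≠ c → b ≠ c → d a b ≤ max (d a c) (d b c))
    (r : ℕ) (S : Finset E) (a b : E) (ha : a ∉ S) (hb : b ∉ S) (hab : a ≠ b) :
    distR d r S a + distR d r (insert a S) b = distR d r S b + distR d r (insert b S) a := by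
  have hka : (insert a S).card = S.card + 1 := Finset.card_insert_of_notMem ha
  have hkb : (insert b S).card = S.card + 1 := Finset.card_insert_of_notMem hb
  rw [distR_eq_maxSum, distR_eq_maxSum, distR_eq_maxSum, distR_eq_maxSum, hka, hkb]
  set t := d a b with ht
  have htba : d b a = t := (hsymm a b hab).symm
  have hne : ∀ x ∈ S, a ≠ x ∧ b ≠ x := by
    intro x hx
    exact ⟨fun h => ha (h ▸ hx), fun h => hb (h ▸ hx)⟩
  have key : ∀ x ∈ S, t < d a x → d a x = d b x := by
    intro x hx hlt
    exact ultra_eq d hsymm hultra a b x hab (hne x hx).1 (hne x hx).2 hlt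
  have key' : ∀ x ∈ S, t < d b x → d b x = d a x := by
    intro x hx hlt
    rw [← htba] at hlt
    exact ultra_eq d hsymm hultra b a x (Ne.symm hab) (hne x hx).2 (hne x hx).1 hlt
  have hfil : S.filter (fun x => t < d a x) = S.filter (fun x => t < d b x) := by
    ext x
    simp only [Finset.mem_filter]
    constructor
    · rintro ⟨hx, hlt⟩; exact ⟨hx, (key x hx hlt) ▸ hlt⟩
    · rintro ⟨hx, hlt⟩; exact ⟨hx, (key' x hx hlt) ▸ hlt⟩
  rcases le_or_gt r S.card with hrS | hrS
  · set n := S.card - r with hn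
    have hn1 : S.card + 1 - r = n + 1 := by omega
    have hnS : n ≤ S.card := by omega
    rw [hn1]
    rcases le_or_gt (S.filter (fun x => t < d a x)).card n with hHn | hHn
    · have e1 : maxSum (d b) (n + 1) (insert a S) = t + maxSum (d b) n S := by
        apply maxSum_insert_low (d b) S a ha t htba n hnS
        rw [← hfil]; exact hHn
      have e2 : maxSum (d a) (n + 1) (insert b S) = t + maxSum (d a) n S := by
        apply maxSum_insert_low (d a) S b hb t ht.symm n hnS
        exact hHn
      rw [e1, e2]; ring
    · have e1 : maxSum (d b) (n + 1) (insert a S) = maxSum (d b) (n + 1) S := by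
        apply maxSum_insert_high (d b) S a ha t htba n
        rw [← hfil]; exact hHn
      have e2 : maxSum (d a) (n + 1) (insert b S) = maxSum (d a) (n + 1) S := by
        apply maxSum_insert_high (d a) S b hb t ht.symm n
        exact hHn
      have e3 : maxSum (d a) n S = maxSum (d b) n S :=
        maxSum_congr_filter (d a) (d b) t S n hfil key (by omega)
      have e4 : maxSum (d a) (n + 1) S = maxSum (d b) (n + 1) S :=
        maxSum_congr_filter (d a) (d b) t S (n + 1) hfil key hHn
      rw [e1, e2, e3, e4]
  · have h1 : S.card - r = 0 := by omega
    have h2 : S.card + 1 - r = 0 := by omega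
    rw [h1, h2, maxSum_zero, maxSum_zero, maxSum_zero, maxSum_zero]

lemma perList_perm (w : E → ℝ) (d : E → E → ℝ)
    (hsymm : ∀ a b : E, a ≠ b → d a b = d b a)
    (hultra : ∀ a b c : E, a ≠ b → a ≠ c → b ≠ c → d a b ≤ max (d a c) (d b c))
    (r : ℕ) {l₁ l₂ : List E} (hp : l₁.Perm l₂) (hnd : l₁.Nodup) :
    perList w d r l₁ = perList w d r l₂ := by
  induction hp with
  | nil => rfl
  | cons x h ih =>
    rw [List.nodup_cons] at hnd
    simp only [perList]
    rw [ih hnd.2, List.toFinset_eq_of_perm _ _ h]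
  | swap x y l =>
    rw [List.nodup_cons, List.nodup_cons, List.mem_cons] at hnd
    push_neg at hnd
    obtain ⟨⟨hyx, hyl⟩, hxl, hl⟩ := hnd
    simp only [perList, List.toFinset_cons]
    have := distR_swap d hsymm hultra r l.toFinset x y
      (by simp [hxl]) (by simp [hyl]) (fun h => hyx h.symm)
    have h2 := distR_swap d hsymm hultra r l.toFinset y x
      (by simp [hyl]) (by simp [hxl]) hyx
    linarith [h2]
  | trans h1 h2 ih1 ih2 =>
    exact (ih1 hnd).trans (ih2 (h1.nodup_iff.1 hnd))

end UltraAux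

theorem stmt4 {E : Type*} [DecidableEq E] (w : E → ℝ) (d : E → E → ℝ)
    (hsymm : ∀ a b : E, a ≠ b → d a b = d b a)
    (hultra : ∀ a b c : E, a ≠ b → a ≠ c → b ≠ c → d a b ≤ max (d a c) (d b c))
    (r : ℕ) (l₁ l₂ : List E) (h₁ : l₁.Nodup) (h₂ : l₂.Nodup)
    (h : l₁.toFinset = l₂.toFinset) :
    perList w d r l₁ = perList w d r l₂ := by
  exact perList_perm w d hsymm hultra r
    (List.perm_of_nodup_nodup_toFinset_eq h₁ h₂ h) h₁
end

section
/- Let (E,w,d) be an ultra triple with E finite, r ≥ 0, and let A, B ⊆ E with |A| = |B| + 1. Then there exists u ∈ A \ B such that per_r(A \ {u}) + per_r(B ∪ {u}) ≥ per_r(A) + per_r(B). -/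
open Finset

local instance : IsAntisymm ℝ (· ≥ ·) := ⟨fun _ _ h1 h2 => le_antisymm h2 h1⟩

noncomputable def sortedDesc (S : Multiset ℝ) : List ℝ := (S.sort (· ≤ ·)).reverse

lemma sortedDesc_coe (S : Multiset ℝ) : (↑(sortedDesc S) : Multiset ℝ) = S := by
  simp [sortedDesc]

lemma sortedDesc_length (S : Multiset ℝ) : (sortedDesc S).length = Multiset.card S := by
  simp [sortedDesc]

lemma sortedDesc_sorted (S : Multiset ℝ) : (sortedDesc S).Pairwise (· ≥ ·) := by
  have h := Multiset.pairwise_sort (s := S) (r := (· ≤ ·))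
  unfold sortedDesc
  rw [List.pairwise_reverse]
  exact h.imp (fun hab => hab)

lemma sortedDesc_eq {L : List ℝ} {S : Multiset ℝ} (h1 : L.Pairwise (· ≥ ·))
    (h2 : (↑L : Multiset ℝ) = S) : sortedDesc S = L := by
  refine List.Perm.eq_of_pairwise' (sortedDesc_sorted S) h1 ?_
  rw [← Multiset.coe_eq_coe] at *
  rw [sortedDesc_coe, h2]

/-- top-k sum of a multiset of reals -/
noncomputable def topsum (k : ℕ) (S : Multiset ℝ) : ℝ := ((sortedDesc S).take k).sum

lemma topsum_zero (S : Multiset ℝ) : topsum 0 S = 0 := rfl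

lemma topsum_full {k : ℕ} {S : Multiset ℝ} (h : Multiset.card S ≤ k) :
    topsum k S = S.sum := by
  rw [topsum, List.take_of_length_le (by rw [sortedDesc_length]; exact h)]
  rw [← Multiset.sum_coe, sortedDesc_coe]

lemma sortedDesc_map_monotone {f : ℝ → ℝ} (hf : Monotone f) (S : Multiset ℝ) :
    sortedDesc (S.map f) = (sortedDesc S).map f := by
  refine sortedDesc_eq ?_ ?_
  · exact List.Pairwise.map f (fun a b hab => hf hab) (sortedDesc_sorted S)
  · rw [← Multiset.map_coe, sortedDesc_coe]

lemma le_of_le_cons_of_not_mem {a : ℝ} {U T : Multiset ℝ} (h : U ≤ a ::ₘ T) (ha : a ∉ U) :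
    U ≤ T := by
  classical
  rw [Multiset.le_iff_count] at h ⊢
  intro x
  have := h x
  rcases eq_or_ne x a with rfl | hx
  · simp [Multiset.count_eq_zero_of_notMem ha]
  · simpa [Multiset.count_cons_of_ne hx] using this

lemma sum_le_sorted_take : ∀ (L : List ℝ), L.Pairwise (· ≥ ·) → ∀ (U : Multiset ℝ),
    U ≤ ↑L → U.sum ≤ (L.take (Multiset.card U)).sum := by
  intro L
  induction L with
  | nil =>
    intro _ U hU
    have : U = 0 := Multiset.le_zero.mp (by simpa using hU)
    simp [this]
  | cons a T ih =>
    intro hs U hU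
    rcases Nat.eq_zero_or_pos (Multiset.card U) with h0 | hpos
    · rw [Multiset.card_eq_zero] at h0; simp [h0]
    obtain ⟨k, hk⟩ : ∃ k, Multiset.card U = k + 1 :=
      ⟨Multiset.card U - 1, (Nat.succ_pred_eq_of_pos hpos).symm⟩
    have hcons : ((a :: T : List ℝ) : Multiset ℝ) = a ::ₘ ↑T := rfl
    by_cases haU : a ∈ U
    · have h1 : U.erase a ≤ ↑T := by
        have h2 := Multiset.erase_le_erase a hU
        rwa [hcons, Multiset.erase_cons_head] at h2
      have h2 := ih hs.of_cons (U.erase a) h1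
      have hcard : Multiset.card (U.erase a) = k := by
        rw [Multiset.card_erase_of_mem haU, hk]; rfl
      rw [hcard] at h2
      have hsum : U.sum = a + (U.erase a).sum := by
        conv_lhs => rw [← Multiset.cons_erase haU]
        rw [Multiset.sum_cons]
      rw [hsum, hk, List.take_succ_cons, List.sum_cons]
      linarith
    · have h1 : U ≤ ↑T := le_of_le_cons_of_not_mem (hcons ▸ hU) haU
      have h2 := ih hs.of_cons U h1
      have hlen : Multiset.card U ≤ T.length := by
        have := Multiset.card_le_card h1
        simpa using this
      refine h2.trans ?_
      rw [hk, List.take_succ_cons, List.sum_cons]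
      have hkT : k < T.length := by omega
      have h3 := List.sum_take_succ T k hkT
      have h4 : T[k] ≤ a := by
        rcases hs with _ | ⟨hrel, _⟩
        exact hrel _ (List.getElem_mem hkT)
      rw [h3]
      linarith

lemma sum_le_topsum {U S : Multiset ℝ} (h : U ≤ S) {k : ℕ} (hk : Multiset.card U = k) :
    U.sum ≤ topsum k S := by
  subst hk
  exact sum_le_sorted_take (sortedDesc S) (sortedDesc_sorted S) U (by rw [sortedDesc_coe]; exact h)

lemma topsum_spec {k : ℕ} {S : Multiset ℝ} (hk : k ≤ Multiset.card S) :
    ∃ U ≤ S, Multiset.card U = k ∧ U.sum = topsum k S := by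
  refine ⟨↑((sortedDesc S).take k), ?_, ?_, ?_⟩
  · conv_rhs => rw [← sortedDesc_coe S]
    exact Multiset.coe_le.mpr (List.take_sublist k _).subperm
  · simp [List.length_take, sortedDesc_length, hk]
  · rw [topsum, Multiset.sum_coe]

lemma mem_sortedDesc {x : ℝ} {S : Multiset ℝ} : x ∈ sortedDesc S ↔ x ∈ S := by
  rw [← Multiset.mem_coe, sortedDesc_coe]

lemma topsum_succ {k : ℕ} {S : Multiset ℝ} (hk : k < Multiset.card S) :
    topsum (k + 1) S = topsum k S + (sortedDesc S).getD k 0 := by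
  have hl : k < (sortedDesc S).length := by rw [sortedDesc_length]; exact hk
  rw [topsum, topsum, List.sum_take_succ _ k hl, List.getD_eq_getElem _ _ hl]

lemma topsum_le_add {j j' : ℕ} {S : Multiset ℝ} {M : ℝ} (hjj : j ≤ j')
    (hj' : j' ≤ Multiset.card S) (hM : ∀ x ∈ S, x ≤ M) :
    topsum j' S ≤ topsum j S + (j' - j : ℕ) * M := by
  induction j' with
  | zero => simp_all
  | succ n ih =>
    rcases Nat.eq_or_lt_of_le hjj with rfl | hlt
    · simp
    · have hn : j ≤ n := Nat.lt_succ_iff.mp hlt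
      have h2 := ih hn (Nat.le_of_succ_le hj')
      rw [topsum_succ (by omega)]
      have hmem : (sortedDesc S).getD n 0 ≤ M := by
        apply hM
        rw [← mem_sortedDesc]
        have hl : n < (sortedDesc S).length := by rw [sortedDesc_length]; omega
        rw [List.getD_eq_getElem _ _ hl]
        exact List.getElem_mem hl
      have hc : ((n + 1 - j : ℕ) : ℝ) = ((n - j : ℕ) : ℝ) + 1 := by
        rw [Nat.cast_sub hn, Nat.cast_sub (by omega)]; push_cast; ring
      rw [hc]
      nlinarith [h2, hmem]

lemma topsum_le_card_mul {j : ℕ} {S : Multiset ℝ} {M : ℝ} (hj : j ≤ Multiset.card S)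
    (hM : ∀ x ∈ S, x ≤ M) : topsum j S ≤ j * M := by
  have := topsum_le_add (Nat.zero_le j) hj hM
  simpa [topsum_zero] using this

lemma sortedDesc_replicate_add {a : ℕ} {M : ℝ} {T : Multiset ℝ} (hM : ∀ x ∈ T, x ≤ M) :
    sortedDesc (Multiset.replicate a M + T) = List.replicate a M ++ sortedDesc T := by
  apply sortedDesc_eq
  · rw [List.pairwise_append]
    refine ⟨?_, sortedDesc_sorted T, ?_⟩
    · exact List.pairwise_replicate.mpr (Or.inr (le_refl M))
    · intro x hx y hy
      rw [List.eq_of_mem_replicate hx]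
      exact hM y (mem_sortedDesc.mp hy)
  · rw [← Multiset.coe_toList (Multiset.replicate a M + T)]
    rw [show ((List.replicate a M ++ sortedDesc T : List ℝ) : Multiset ℝ)
        = ↑(List.replicate a M) + ↑(sortedDesc T) from by
      rw [← Multiset.coe_add]]
    rw [Multiset.coe_replicate, sortedDesc_coe, Multiset.coe_toList]

lemma topsum_replicate_add {a k : ℕ} {M : ℝ} {T : Multiset ℝ} (hak : a ≤ k)
    (hM : ∀ x ∈ T, x ≤ M) :
    topsum k (Multiset.replicate a M + T) = a * M + topsum (k - a) T := by
  rw [topsum, sortedDesc_replicate_add hM, List.take_append,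
    List.sum_append, List.take_replicate, List.length_replicate, List.sum_replicate]
  rw [Nat.min_eq_right hak, nsmul_eq_mul]
  rfl

lemma topsum_replicate_small {a k : ℕ} {M : ℝ} {T : Multiset ℝ} (hak : k ≤ a)
    (hM : ∀ x ∈ T, x ≤ M) :
    topsum k (Multiset.replicate a M + T) = k * M := by
  rw [topsum, sortedDesc_replicate_add hM, List.take_append,
    List.take_replicate, List.length_replicate, Nat.min_eq_left hak,
    Nat.sub_eq_zero_of_le hak, List.take_zero, List.append_nil, List.sum_replicate,
    nsmul_eq_mul]

lemma exists_decomp {U S S' : Multiset ℝ} (h : U ≤ S + S') :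
    ∃ U₁ U₂ : Multiset ℝ, U₁ ≤ S ∧ U₂ ≤ S' ∧ U = U₁ + U₂ := by
  classical
  refine ⟨U ∩ S, U - S, Multiset.inter_le_right, ?_, ?_⟩
  · rw [Multiset.le_iff_count]
    intro x
    have hc := Multiset.le_iff_count.mp h x
    rw [Multiset.count_add] at hc
    rw [Multiset.count_sub]
    omega
  · ext x
    rw [Multiset.count_add, Multiset.count_inter, Multiset.count_sub]
    omega

lemma topsum_add_le {j e : ℕ} {S S' : Multiset ℝ} {M : ℝ} (hS' : Multiset.card S' = e)
    (hj : j ≤ Multiset.card S) (hMS : ∀ x ∈ S, x ≤ M) (hMS' : ∀ x ∈ S', x ≤ M) :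
    topsum (j + e) (S + S') ≤ topsum j S + e * M := by
  obtain ⟨U, hU, hUcard, hUsum⟩ := topsum_spec (k := j + e) (S := S + S')
    (by rw [Multiset.card_add]; omega)
  obtain ⟨U₁, U₂, h1, h2, rfl⟩ := exists_decomp hU
  rw [← hUsum, Multiset.sum_add]
  have hc1 : Multiset.card U₁ ≤ Multiset.card S := Multiset.card_le_card h1
  have hc2 : Multiset.card U₂ ≤ e := by rw [← hS']; exact Multiset.card_le_card h2
  have hcc : Multiset.card U₁ + Multiset.card U₂ = j + e := by
    rw [← Multiset.card_add]; exact hUcard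
  have hs1 : U₁.sum ≤ topsum (Multiset.card U₁) S := sum_le_topsum h1 rfl
  have hs1' : topsum (Multiset.card U₁) S ≤ topsum j S + ((Multiset.card U₁ - j : ℕ) : ℝ) * M :=
    topsum_le_add (by omega) hc1 hMS
  have hs2 : U₂.sum ≤ (Multiset.card U₂ : ℝ) * M := by
    have := Multiset.sum_le_card_nsmul U₂ M (fun x hx => hMS' x (Multiset.mem_of_le h2 hx))
    rwa [nsmul_eq_mul] at this
  have hcast : ((Multiset.card U₁ - j : ℕ) : ℝ) + (Multiset.card U₂ : ℝ) = (e : ℝ) := by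
    rw [Nat.cast_sub (by omega)]
    push_cast
    have : (Multiset.card U₁ : ℝ) + Multiset.card U₂ = j + e := by exact_mod_cast hcc
    linarith
  have : U₁.sum + U₂.sum ≤ topsum j S + (((Multiset.card U₁ - j : ℕ) : ℝ) + (Multiset.card U₂ : ℝ)) * M := by
    nlinarith [hs1, hs1', hs2]
  rwa [hcast] at this

lemma topsum_cons {k : ℕ} {m : ℝ} {S : Multiset ℝ} (hk : k + 1 ≤ Multiset.card S) :
    topsum (k + 1) (m ::ₘ S) = max (topsum (k + 1) S) (m + topsum k S) := by
  apply le_antisymm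
  · obtain ⟨U, hU, hUcard, hUsum⟩ := topsum_spec (k := k + 1) (S := m ::ₘ S)
      (by rw [Multiset.card_cons]; omega)
    rw [← hUsum]
    by_cases hm : m ∈ U
    · refine le_max_of_le_right ?_
      have he : U.erase m ≤ S := by
        have h2 := Multiset.erase_le_erase m hU
        rwa [Multiset.erase_cons_head] at h2
      have : U.sum = m + (U.erase m).sum := by
        conv_lhs => rw [← Multiset.cons_erase hm]
        rw [Multiset.sum_cons]
      rw [this]
      have := sum_le_topsum he (k := k) (by rw [Multiset.card_erase_of_mem hm, hUcard]; rfl)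
      linarith
    · refine le_max_of_le_left ?_
      exact sum_le_topsum (le_of_le_cons_of_not_mem hU hm) hUcard
  · rw [max_le_iff]
    constructor
    · obtain ⟨U, hU, hUcard, hUsum⟩ := topsum_spec (k := k + 1) (S := S) hk
      rw [← hUsum]
      exact sum_le_topsum (hU.trans (Multiset.le_cons_self S m)) hUcard
    · obtain ⟨U, hU, hUcard, hUsum⟩ := topsum_spec (k := k) (S := S) (by omega)
      rw [← hUsum]
      have := sum_le_topsum (Multiset.cons_le_cons m hU) (k := k + 1)
        (by rw [Multiset.card_cons, hUcard])
      rw [Multiset.sum_cons] at this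
      exact this

lemma exists_preimage_of_le_map {α : Type*} (f : α → ℝ) :
    ∀ (S : Multiset α) (U : Multiset ℝ), U ≤ S.map f → ∃ V ≤ S, V.map f = U := by
  classical
  intro S
  induction S using Multiset.induction_on with
  | empty =>
    intro U hU
    refine ⟨0, le_refl _, ?_⟩
    simp only [Multiset.map_zero] at hU ⊢
    exact (Multiset.le_zero.mp hU).symm ▸ rfl
  | cons a S ih =>
    intro U hU
    rw [Multiset.map_cons] at hU
    by_cases hm : f a ∈ U
    · have he : U.erase (f a) ≤ S.map f := by
        have h2 := Multiset.erase_le_erase (f a) hU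
        rwa [Multiset.erase_cons_head] at h2
      obtain ⟨V, hV, hVmap⟩ := ih _ he
      refine ⟨a ::ₘ V, Multiset.cons_le_cons a hV, ?_⟩
      rw [Multiset.map_cons, hVmap, Multiset.cons_erase hm]
    · obtain ⟨V, hV, hVmap⟩ := ih _ (le_of_le_cons_of_not_mem hU hm)
      exact ⟨V, hV.trans (Multiset.le_cons_self S a), hVmap⟩

lemma distR_eq_topsum {E : Type*} [DecidableEq E] (d : E → E → ℝ) {r : ℕ}
    {C : Finset E} (v : E) (hr : r ≤ C.card) :
    distR d r C v = topsum (C.card - r) (C.val.map (d v)) := by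
  rcases Nat.eq_or_lt_of_le hr with rfl | hlt
  · rw [distR, if_pos (le_refl _), Nat.sub_self, topsum_zero]
  · rw [distR, if_neg (by omega)]
    set k := C.card - r with hk
    have hset : {s : ℝ | ∃ A ⊆ C, A.card = C.card - r ∧ s = ∑ x ∈ A, d v x} =
        ↑((C.powersetCard k).image fun A => ∑ x ∈ A, d v x) := by
      ext s
      simp only [Set.mem_setOf_eq, coe_image, Set.mem_image, mem_coe, mem_powersetCard]
      constructor
      · rintro ⟨A, hA, hAc, rfl⟩; exact ⟨A, ⟨hA, hAc⟩, rfl⟩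
      · rintro ⟨A, ⟨hA, hAc⟩, rfl⟩; exact ⟨A, hA, hAc, rfl⟩
    have hne : ((C.powersetCard k).image fun A => ∑ x ∈ A, d v x).Nonempty :=
      Nonempty.image (Finset.powersetCard_nonempty.mpr (by omega)) _
    rw [hset, hne.csSup_eq_max']
    apply le_antisymm
    · apply Finset.max'_le
      intro s hs
      obtain ⟨A, hA, rfl⟩ := Finset.mem_image.mp hs
      rw [Finset.mem_powersetCard] at hA
      have h1 : A.val.map (d v) ≤ C.val.map (d v) :=
        Multiset.map_le_map (Finset.val_le_iff.mpr hA.1)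
      have := sum_le_topsum h1 (k := k) (by rw [Multiset.card_map]; exact hA.2)
      rwa [← Finset.sum_eq_multiset_sum] at this
    · obtain ⟨U, hU, hUcard, hUsum⟩ := topsum_spec (k := k) (S := C.val.map (d v))
        (by rw [Multiset.card_map]; exact (by omega : k ≤ C.card))
      obtain ⟨V, hV, hVmap⟩ := exists_preimage_of_le_map (d v) C.val U hU
      have hnd : V.Nodup := Multiset.nodup_of_le hV C.nodup
      rw [← hUsum, ← hVmap]
      apply Finset.le_max'
      apply Finset.mem_image.mpr
      refine ⟨⟨V, hnd⟩, ?_, ?_⟩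
      · rw [Finset.mem_powersetCard]
        refine ⟨Finset.val_le_iff.mp hV, ?_⟩
        have : Multiset.card U = k := hUcard
        rw [← hVmap, Multiset.card_map] at this
        exact this
      · rw [Finset.sum_eq_multiset_sum]

lemma distR_of_card_le {E : Type*} [DecidableEq E] (d : E → E → ℝ) {r : ℕ}
    {C : Finset E} (v : E) (hr : C.card ≤ r) : distR d r C v = 0 := by
  rw [distR, if_pos hr]

lemma swap_distR {E : Type*} [DecidableEq E] {d : E → E → ℝ}
    (hsymm : ∀ a b : E, a ≠ b → d a b = d b a)
    (hultra : ∀ a b c : E, a ≠ b → a ≠ c → b ≠ c → d a b ≤ max (d a c) (d b c))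
    (r : ℕ) (C : Finset E) {a b : E} (hab : a ≠ b) (haC : a ∉ C) (hbC : b ∉ C) :
    distR d r C a + distR d r (insert a C) b = distR d r C b + distR d r (insert b C) a := by
  set n := C.card with hn
  have hia : (insert a C).card = n + 1 := Finset.card_insert_of_notMem haC
  have hib : (insert b C).card = n + 1 := Finset.card_insert_of_notMem hbC
  set m := d a b with hm
  have hmba : d b a = m := (hsymm a b hab).symm ▸ (hsymm b a hab.symm)
  have hiva : (insert a C).val = a ::ₘ C.val := Finset.insert_val_of_notMem haC
  have hivb : (insert b C).val = b ::ₘ C.val := Finset.insert_val_of_notMem hbC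
  -- pointwise capped equality
  have hcap : ∀ x ∈ C.val, max (d a x) m = max (d b x) m := by
    intro x hx
    have hxa : x ≠ a := fun h => haC (h ▸ hx)
    have hxb : x ≠ b := fun h => hbC (h ▸ hx)
    have h1 : d a x ≤ max (d b x) m := by
      have := hultra a x b hxa.symm hab hxb
      rw [hsymm x b hxb] at this
      exact this.trans_eq (by rw [max_comm, hm, hsymm a b hab])
    have h2 : d b x ≤ max (d a x) m := by
      have := hultra b x a hxb.symm hab.symm hxa
      rw [hsymm x a hxa] at this
      rw [hmba] at this
      exact this.trans_eq (by rw [max_comm])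
    rcases le_total (d a x) m with h | h
    · rw [max_eq_right h]
      rcases le_total (d b x) m with h' | h'
      · rw [max_eq_right h']
      · rw [max_eq_left h']
        exact le_antisymm h' (h2.trans (max_le h le_rfl))
    · rw [max_eq_left h]
      rcases le_total (d b x) m with h' | h'
      · rw [max_eq_right h']
        exact le_antisymm (h1.trans (max_le h' le_rfl)) h
      · rw [max_eq_left h']
        exact le_antisymm (h1.trans (max_le le_rfl h')) (h2.trans (max_le le_rfl h))
  rcases lt_or_ge n r with hnr | hrn
  · rw [distR_of_card_le d a (le_of_lt (lt_of_eq_of_lt hn.symm hnr)), distR_of_card_le d b (le_of_lt (lt_of_eq_of_lt hn.symm hnr)),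
      distR_of_card_le d b (by rw [hia]; omega), distR_of_card_le d a (by rw [hib]; omega)]
  -- r ≤ n
  rcases Nat.eq_zero_or_pos r with rfl | hrpos
  · -- r = 0 : everything is the full sum
    have h1 : ∀ (D : Finset E) (v : E), distR d 0 D v = (D.val.map (d v)).sum := by
      intro D v
      rcases Nat.eq_zero_or_pos D.card with h0 | h0
      · rw [distR_of_card_le d v (by omega)]
        rw [Finset.card_eq_zero] at h0
        simp [h0]
      · rw [distR_eq_topsum d v (by omega), topsum_full (by rw [Multiset.card_map]; exact Nat.le_of_eq rfl)]
    rw [h1, h1, h1, h1, hiva, hivb, Multiset.map_cons, Multiset.map_cons,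
      Multiset.sum_cons, Multiset.sum_cons, hmba]
    ring
  -- 1 ≤ r ≤ n
  set k := n - r with hk
  have hkn : k < n := by omega
  set Sa := C.val.map (d a) with hSa
  set Sb := C.val.map (d b) with hSb
  have hcSa : Multiset.card Sa = n := by rw [hSa, Multiset.card_map]; rfl
  have hcSb : Multiset.card Sb = n := by rw [hSb, Multiset.card_map]; rfl
  have hda : distR d r C a = topsum k Sa := distR_eq_topsum d a hrn
  have hdb : distR d r C b = topsum k Sb := distR_eq_topsum d b hrn
  have hdab : distR d r (insert a C) b = topsum (k + 1) (m ::ₘ Sb) := by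
    rw [distR_eq_topsum d b (by omega), hia, hiva, Multiset.map_cons, hmba]
    congr 1
    omega
  have hdba : distR d r (insert b C) a = topsum (k + 1) (m ::ₘ Sa) := by
    rw [distR_eq_topsum d a (by omega), hib, hivb, Multiset.map_cons, ← hm]
    congr 1
    omega
  rw [hda, hdb, hdab, hdba,
    topsum_cons (by omega), topsum_cons (by omega),
    topsum_succ (by omega), topsum_succ (by omega)]
  -- remaining: capped k-th entries agree
  have hmax : max ((sortedDesc Sa).getD k 0) m = max ((sortedDesc Sb).getD k 0) m := by
    have hcapped : Sa.map (fun s => max s m) = Sb.map (fun s => max s m) := by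
      rw [hSa, hSb, Multiset.map_map, Multiset.map_map]
      exact Multiset.map_congr rfl (fun x hx => hcap x hx)
    have hmono : Monotone (fun s : ℝ => max s m) := fun x y hxy => max_le_max hxy (le_refl m)
    have h1 := sortedDesc_map_monotone hmono Sa
    have h2 := sortedDesc_map_monotone hmono Sb
    rw [hcapped] at h1
    have heq : (sortedDesc Sa).map (fun s => max s m) = (sortedDesc Sb).map (fun s => max s m) := by
      rw [← h1, ← h2]
    have hla : k < (sortedDesc Sa).length := by rw [sortedDesc_length]; omega
    have hlb : k < (sortedDesc Sb).length := by rw [sortedDesc_length]; omega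
    have h3 : ((sortedDesc Sa).map (fun s => max s m)).getD k (max 0 m)
        = ((sortedDesc Sb).map (fun s => max s m)).getD k (max 0 m) := by rw [heq]
    rw [List.getD_eq_getElem _ _ (by rw [List.length_map]; exact hla),
      List.getD_eq_getElem _ _ (by rw [List.length_map]; exact hlb),
      List.getElem_map, List.getElem_map] at h3
    rw [List.getD_eq_getElem _ _ hla, List.getD_eq_getElem _ _ hlb]
    exact h3
  have expand : ∀ (t s : ℝ), max (t + s) (m + t) = t + max s m := by
    intro t s
    rcases le_total s m with h | h
    · rw [max_eq_right (by linarith : t + s ≤ m + t), max_eq_right h]; ring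
    · rw [max_eq_left (by linarith : m + t ≤ t + s), max_eq_left h]
  rw [expand, expand, hmax]
  ring

section
variable {E : Type*} [DecidableEq E] {w : E → ℝ} {d : E → E → ℝ}
  (hsymm : ∀ a b : E, a ≠ b → d a b = d b a)
  (hultra : ∀ a b c : E, a ≠ b → a ≠ c → b ≠ c → d a b ≤ max (d a c) (d b c))

include hsymm hultra

lemma perList_perm_s8 {r : ℕ} : ∀ {l l' : List E}, l.Perm l' → l.Nodup →
    perList w d r l = perList w d r l' := by
  intro l l' h
  induction h with
  | nil => intro _; rfl
  | @cons x t₁ t₂ p ih =>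
    intro hn
    have ht : t₁.toFinset = t₂.toFinset := by
      ext z
      simp only [List.mem_toFinset]
      exact p.mem_iff
    rw [perList, perList, ih (List.nodup_cons.mp hn).2, ht]
  | swap x y l =>
    intro hn
    have hyx : y ≠ x := (List.nodup_cons.mp hn).1 ∘ (fun h => h ▸ List.mem_cons_self (a := x) (l := l))
    have hyl : y ∉ l.toFinset := by
      intro h
      exact (List.nodup_cons.mp hn).1 (List.mem_cons_of_mem x (List.mem_toFinset.mp h))
    have hxl : x ∉ l.toFinset := by
      intro h
      exact (List.nodup_cons.mp (List.nodup_cons.mp hn).2).1 (List.mem_toFinset.mp h)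
    have hs := swap_distR hsymm hultra r l.toFinset hyx hyl hxl
    rw [perList, perList, perList, perList, List.toFinset_cons, List.toFinset_cons]
    linarith
  | trans p₁ p₂ ih₁ ih₂ =>
    intro hn
    rw [ih₁ hn, ih₂ (p₁.nodup_iff.mp hn)]

lemma perR_insert {r : ℕ} {B : Finset E} {u : E} (hu : u ∉ B) :
    perR w d r (insert u B) = perR w d r B + w u + distR d r B u := by
  rw [perR, perList_perm_s8 hsymm hultra (Finset.toList_insert hu) (Finset.nodup_toList _),
    perList, Finset.toList_toFinset]
  rfl

lemma perR_erase {r : ℕ} {A : Finset E} {u : E} (hu : u ∈ A) :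
    perR w d r A = perR w d r (A.erase u) + w u + distR d r (A.erase u) u := by
  conv_lhs => rw [← Finset.insert_erase hu]
  exact perR_insert hsymm hultra (Finset.notMem_erase u A)

end

lemma lemG {E : Type*} [DecidableEq E] {d : E → E → ℝ}
    (hsymm : ∀ a b : E, a ≠ b → d a b = d b a)
    (hultra : ∀ a b c : E, a ≠ b → a ≠ c → b ≠ c → d a b ≤ max (d a c) (d b c)) :
    ∀ N : ℕ, ∀ A B : Finset E, (A ∪ B).card ≤ N → A.card = B.card + 1 →
    ∀ k : ℕ, k ≤ B.card →
    ∃ u ∈ A \ B, topsum k ((A.erase u).val.map (d u)) ≤ topsum k (B.val.map (d u)) := by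
  intro N
  induction N with
  | zero =>
    intro A B hN hc k hk
    exfalso
    have h1 : A.card ≤ (A ∪ B).card := Finset.card_le_card Finset.subset_union_left
    omega
  | succ N ih =>
    intro A B hN hc k hk
    have hAB : (A \ B).Nonempty := by
      rw [Finset.sdiff_nonempty]
      intro hsub
      have := Finset.card_le_card hsub
      omega
    rcases Nat.eq_zero_or_pos k with rfl | hkpos
    · obtain ⟨u, hu⟩ := hAB
      exact ⟨u, hu, by rw [topsum_zero, topsum_zero]⟩
    -- k ≥ 1 : B nonempty, A has ≥ 2 elements
    set W := A ∪ B with hW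
    have hWA : A ⊆ W := Finset.subset_union_left
    have hWB : B ⊆ W := Finset.subset_union_right
    have hA2 : 2 ≤ A.card := by omega
    set P := (W ×ˢ W).filter (fun p => p.1 ≠ p.2) with hP
    have hPne : P.Nonempty := by
      obtain ⟨x, hx, y, hy, hxy⟩ := Finset.one_lt_card.mp (by omega : 1 < A.card)
      exact ⟨(x, y), by
        rw [hP, Finset.mem_filter, Finset.mem_product]
        exact ⟨⟨hWA hx, hWA hy⟩, hxy⟩⟩
    set M := P.sup' hPne (fun p => d p.1 p.2) with hM
    have hdM : ∀ x ∈ W, ∀ y ∈ W, x ≠ y → d x y ≤ M := by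
      intro x hx y hy hxy
      have hmem : (x, y) ∈ P := by
        rw [hP, Finset.mem_filter, Finset.mem_product]
        exact ⟨⟨hx, hy⟩, hxy⟩
      exact Finset.le_sup' (fun p => d p.1 p.2) hmem
    set K : E → Finset E := fun v => W.filter (fun x => x = v ∨ d x v < M) with hK
    have hKself : ∀ v ∈ W, v ∈ K v := by
      intro v hv
      rw [hK, Finset.mem_filter]
      exact ⟨hv, Or.inl rfl⟩
    have hKsub : ∀ v, K v ⊆ W := fun v => Finset.filter_subset _ _
    have hKmem : ∀ {v x : E}, x ∈ K v ↔ x ∈ W ∧ (x = v ∨ d x v < M) := by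
      intro v x
      rw [hK, Finset.mem_filter]
    -- transitivity helper
    have htrans : ∀ x v y : E, x ≠ v → d x v < M → (y = x ∨ d y x < M) → (y = v ∨ d y v < M) := by
      intro x v y hxv hdxv hy
      rcases hy with rfl | hdyx
      · right; exact hdxv
      · by_cases hyv : y = v
        · left; exact hyv
        · by_cases hyx : y = x
          · right; rw [hyx]; exact hdxv
          · right
            have := hultra y v x hyv hyx (fun h => hxv h.symm)
            rw [hsymm v x (fun h => hxv h.symm)] at this
            exact lt_of_le_of_lt this (max_lt hdyx hdxv)
    have hKswap : ∀ v ∈ W, ∀ x ∈ K v, K x = K v := by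
      intro v hv x hx
      obtain ⟨hxW, hxv⟩ := hKmem.mp hx
      rcases hxv with rfl | hdxv
      · rfl
      · by_cases hxveq : x = v
        · rw [hxveq]
        · ext y
          rw [hKmem, hKmem]
          constructor
          · rintro ⟨hyW, hy⟩
            exact ⟨hyW, htrans x v y hxveq hdxv hy⟩
          · rintro ⟨hyW, hy⟩
            refine ⟨hyW, htrans v x y (fun h => hxveq h.symm) ?_ hy⟩
            rw [hsymm v x (fun h => hxveq h.symm)]
            exact hdxv
    -- max pair spans two cliques, so every clique is proper
    have hKproper : ∀ v, (K v).card ≤ N := by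
      intro v
      obtain ⟨p, hp, hpM⟩ := Finset.exists_mem_eq_sup' hPne (fun p => d p.1 p.2)
      rw [hP, Finset.mem_filter, Finset.mem_product] at hp
      obtain ⟨⟨hp1, hp2⟩, hpne⟩ := hp
      have hmiss : p.1 ∉ K v ∨ p.2 ∉ K v := by
        by_contra hcon
        push_neg at hcon
        obtain ⟨h1, h2⟩ := hcon
        obtain ⟨h1W, h1h⟩ := hKmem.mp h1
        obtain ⟨h2W, h2h⟩ := hKmem.mp h2
        have hh : p.2 = p.1 ∨ d p.2 p.1 < M := by
          by_cases h1v : p.1 = v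
          · rw [h1v]; exact h2h
          · have h1d : d p.1 v < M := h1h.resolve_left h1v
            have hvp : d v p.1 < M := by
              rw [hsymm v p.1 (fun h => h1v h.symm)]; exact h1d
            exact htrans v p.1 p.2 (fun h => h1v h.symm) hvp h2h
        rcases hh with h | h
        · exact hpne h.symm
        · rw [hsymm p.2 p.1 (fun hq => hpne hq.symm), ← hpM] at h
          exact lt_irrefl _ h
      have hss : K v ⊂ W := by
        rw [Finset.ssubset_iff_of_subset (hKsub v)]
        rcases hmiss with h | h
        · exact ⟨p.1, hp1, h⟩
        · exact ⟨p.2, hp2, h⟩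
      have := Finset.card_lt_card hss
      omega
    -- pigeonhole
    have hdisjK : ∀ S ∈ W.image K, ∀ T ∈ W.image K, S ≠ T → Disjoint S T := by
      intro S hS T hT hST
      obtain ⟨v, hv, rfl⟩ := Finset.mem_image.mp hS
      obtain ⟨v', hv', rfl⟩ := Finset.mem_image.mp hT
      rw [Finset.disjoint_left]
      intro z hzS hzT
      exact hST ((hKswap v hv z hzS).symm.trans (hKswap v' hv' z hzT))
    have hcover : ∀ (X : Finset E), X ⊆ W → X = (W.image K).biUnion (fun S => X ∩ S) := by
      intro X hX
      ext z
      constructor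
      · intro hz
        rw [Finset.mem_biUnion]
        exact ⟨K z, Finset.mem_image_of_mem K (hX hz), Finset.mem_inter.mpr ⟨hz, hKself z (hX hz)⟩⟩
      · intro hz
        rw [Finset.mem_biUnion] at hz
        obtain ⟨S, _, hzS⟩ := hz
        exact (Finset.mem_inter.mp hzS).1
    have hsum : ∀ (X : Finset E), X ⊆ W → ∑ S ∈ W.image K, (X ∩ S).card = X.card := by
      intro X hX
      rw [← Finset.card_biUnion, ← hcover X hX]
      intro S hS T hT hST
      exact Finset.disjoint_left.mpr (fun z hz1 hz2 =>
        Finset.disjoint_left.mp (hdisjK S hS T hT hST)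
          (Finset.mem_inter.mp hz1).2 (Finset.mem_inter.mp hz2).2)
    have hpig : ∃ S ∈ W.image K, (B ∩ S).card < (A ∩ S).card := by
      apply Finset.exists_lt_of_sum_lt
      rw [hsum A hWA, hsum B hWB]
      omega
    obtain ⟨KK, hKKmem, hKKlt⟩ := hpig
    obtain ⟨v₀, hv₀, hKKeq⟩ := Finset.mem_image.mp hKKmem
    -- notation
    set q := (B ∩ KK).card with hq
    set a' := (A \ KK).card with ha'
    set b' := (B \ KK).card with hb'
    have hsplitA : (A ∩ KK).card + a' = A.card := Finset.card_inter_add_card_sdiff A KK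
    have hsplitB : q + b' = B.card := Finset.card_inter_add_card_sdiff B KK
    have hsurplus : q + 1 ≤ (A ∩ KK).card := hKKlt
    have hab' : a' ≤ b' := by omega
    set e := (A ∩ KK).card - (q + 1) with he
    have heb : b' - a' = e := by omega
    -- choose A''
    obtain ⟨A'', hA''sub, hA''card⟩ := Finset.exists_subset_card_eq (hsurplus)
    have hA''W : A'' ⊆ A ∩ KK := hA''sub
    -- apply induction hypothesis
    have hKKN : (A'' ∪ (B ∩ KK)).card ≤ N := by
      have hsub2 : A'' ∪ (B ∩ KK) ⊆ KK := by
        apply Finset.union_subset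
        · exact hA''sub.trans Finset.inter_subset_right
        · exact Finset.inter_subset_right
      calc (A'' ∪ (B ∩ KK)).card ≤ KK.card := Finset.card_le_card hsub2
      _ ≤ N := by rw [← hKKeq]; exact hKproper v₀
    obtain ⟨u, huAB, hured⟩ := ih A'' (B ∩ KK) hKKN (by omega) (k - b') (by omega)
    rw [Finset.mem_sdiff] at huAB
    obtain ⟨huA'', huBK⟩ := huAB
    have huAK : u ∈ A ∩ KK := hA''sub huA''
    have huKK : u ∈ KK := (Finset.mem_inter.mp huAK).2
    have huA : u ∈ A := (Finset.mem_inter.mp huAK).1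
    have huB : u ∉ B := fun h => huBK (Finset.mem_inter.mpr ⟨h, huKK⟩)
    have huW : u ∈ W := hWA huA
    have hKu : K u = KK := by
      rw [← hKKeq]
      exact hKswap v₀ hv₀ u (hKKeq ▸ huKK)
    -- distances ≤ M and = M across
    have hle : ∀ x ∈ W, x ≠ u → d u x ≤ M := fun x hx hxu => hdM u huW x hx (fun h => hxu h.symm)
    have hcross : ∀ x ∈ W, x ∉ KK → d u x = M := by
      intro x hx hxKK
      have hxu : x ≠ u := fun h => hxKK (h ▸ huKK)
      refine le_antisymm (hle x hx hxu) ?_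
      by_contra hlt
      push_neg at hlt
      have : x ∈ K u := hKmem.mpr ⟨hx, Or.inr (by rw [hsymm x u hxu]; exact hlt)⟩
      rw [hKu] at this
      exact hxKK this
    -- decompositions
    have hdisjA : Disjoint (A \ KK) ((A ∩ KK).erase u) := by
      rw [Finset.disjoint_left]
      intro x hx1 hx2
      exact (Finset.mem_sdiff.mp hx1).2 (Finset.mem_inter.mp (Finset.mem_of_mem_erase hx2)).2
    have hAer : A.erase u = (A \ KK).disjUnion ((A ∩ KK).erase u) hdisjA := by
      rw [Finset.disjUnion_eq_union]
      ext z
      rw [Finset.mem_erase, Finset.mem_union, Finset.mem_sdiff, Finset.mem_erase,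
        Finset.mem_inter]
      constructor
      · rintro ⟨hzu, hzA⟩
        by_cases hzK : z ∈ KK
        · exact Or.inr ⟨hzu, hzA, hzK⟩
        · exact Or.inl ⟨hzA, hzK⟩
      · rintro (⟨hzA, hzK⟩ | ⟨hzu, hzA, _⟩)
        · exact ⟨fun h => hzK (h ▸ huKK), hzA⟩
        · exact ⟨hzu, hzA⟩
    have hdisjB : Disjoint (B \ KK) (B ∩ KK) := by
      rw [Finset.disjoint_left]
      intro x hx1 hx2
      exact (Finset.mem_sdiff.mp hx1).2 (Finset.mem_inter.mp hx2).2
    have hBer : B = (B \ KK).disjUnion (B ∩ KK) hdisjB := by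
      rw [Finset.disjUnion_eq_union]
      ext z
      rw [Finset.mem_union, Finset.mem_sdiff, Finset.mem_inter]
      constructor
      · intro hz
        by_cases hzK : z ∈ KK
        · exact Or.inr ⟨hz, hzK⟩
        · exact Or.inl ⟨hz, hzK⟩
      · rintro (⟨hz, _⟩ | ⟨hz, _⟩) <;> exact hz
    set TA : Multiset ℝ := ((A ∩ KK).erase u).val.map (d u) with hTA
    set TB : Multiset ℝ := (B ∩ KK).val.map (d u) with hTBdef
    have hrepA : (A \ KK).val.map (d u) = Multiset.replicate a' M := by
      rw [Multiset.map_congr rfl (fun x hx => hcross x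
        (hWA (Finset.mem_sdiff.mp hx).1) (Finset.mem_sdiff.mp hx).2)]
      rw [Multiset.map_const']
      rfl
    have hrepB : (B \ KK).val.map (d u) = Multiset.replicate b' M := by
      rw [Multiset.map_congr rfl (fun x hx => hcross x
        (hWB (Finset.mem_sdiff.mp hx).1) (Finset.mem_sdiff.mp hx).2)]
      rw [Multiset.map_const']
      rfl
    have mapA : (A.erase u).val.map (d u) = Multiset.replicate a' M + TA := by
      rw [hAer]
      show (((A \ KK).val + ((A ∩ KK).erase u).val).map (d u)) = _
      rw [Multiset.map_add, hrepA]
    have mapB : B.val.map (d u) = Multiset.replicate b' M + TB := by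
      conv_lhs => rw [hBer]
      show (((B \ KK).val + (B ∩ KK).val).map (d u)) = _
      rw [Multiset.map_add, hrepB]
    -- bounds
    have hboundA : ∀ x ∈ A, x ≠ u → d u x ≤ M := fun x hx hxu => hle x (hWA hx) hxu
    have hbTA : ∀ s ∈ TA, s ≤ M := by
      intro s hs
      obtain ⟨y, hy, rfl⟩ := Multiset.mem_map.mp hs
      rw [Finset.mem_val, Finset.mem_erase, Finset.mem_inter] at hy
      exact hboundA y hy.2.1 hy.1
    have hbTB : ∀ s ∈ TB, s ≤ M := by
      intro s hs
      obtain ⟨y, hy, rfl⟩ := Multiset.mem_map.mp hs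
      rw [Finset.mem_val, Finset.mem_inter] at hy
      exact hle y (hWB hy.1) (fun h => huB (h ▸ hy.1))
    have hcTA : Multiset.card TA = (A ∩ KK).card - 1 := by
      rw [hTA, Multiset.card_map, Finset.card_val, Finset.card_erase_of_mem
        (Finset.mem_inter.mpr ⟨huA, huKK⟩)]
    have hcTB : Multiset.card TB = q := by
      rw [hTBdef, Multiset.card_map, Finset.card_val]
    refine ⟨u, Finset.mem_sdiff.mpr ⟨huA, huB⟩, ?_⟩
    rw [mapA, mapB]
    rcases le_or_gt k b' with hkb | hkb
    · -- easy case
      rw [topsum_replicate_small hkb hbTB]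
      rcases le_or_gt k a' with hka | hka
      · rw [topsum_replicate_small hka hbTA]
      · rw [topsum_replicate_add (le_of_lt hka) hbTA]
        have hcard : k - a' ≤ Multiset.card TA := by omega
        have h3 := topsum_le_card_mul hcard hbTA
        have hc : ((k - a' : ℕ) : ℝ) = (k : ℝ) - a' := by
          rw [Nat.cast_sub (le_of_lt hka)]
        rw [hc] at h3
        nlinarith [h3]
    · -- main case
      rw [topsum_replicate_add (by omega : a' ≤ k) hbTA,
        topsum_replicate_add (by omega : b' ≤ k) hbTB]
      -- split TA
      have hdisj2 : Disjoint (A''.erase u) ((A ∩ KK) \ A'') := by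
        rw [Finset.disjoint_left]
        intro x hx1 hx2
        exact (Finset.mem_sdiff.mp hx2).2 (Finset.mem_of_mem_erase hx1)
      have hsplit2 : (A ∩ KK).erase u = (A''.erase u).disjUnion ((A ∩ KK) \ A'') hdisj2 := by
        rw [Finset.disjUnion_eq_union]
        ext z
        rw [Finset.mem_erase, Finset.mem_union, Finset.mem_erase, Finset.mem_sdiff]
        constructor
        · rintro ⟨hzu, hzA⟩
          by_cases hz2 : z ∈ A''
          · exact Or.inl ⟨hzu, hz2⟩
          · exact Or.inr ⟨hzA, hz2⟩
        · rintro (⟨hzu, hz2⟩ | ⟨hzA, hz2⟩)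
          · exact ⟨hzu, hA''sub hz2⟩
          · exact ⟨fun h => hz2 (h ▸ huA''), hzA⟩
      set SA : Multiset ℝ := (A''.erase u).val.map (d u) with hSA
      set SE : Multiset ℝ := ((A ∩ KK) \ A'').val.map (d u) with hSE
      have hTAsplit : TA = SA + SE := by
        rw [hTA, hsplit2]
        show ((A''.erase u).val + ((A ∩ KK) \ A'').val).map (d u) = _
        rw [Multiset.map_add]
      have hcSA : Multiset.card SA = q := by
        rw [hSA, Multiset.card_map, Finset.card_val, Finset.card_erase_of_mem huA'', hA''card]
        rfl
      have hcSE : Multiset.card SE = e := by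
        rw [hSE, Multiset.card_map, Finset.card_val, Finset.card_sdiff_of_subset hA''sub, hA''card]
      have hbSA : ∀ s ∈ SA, s ≤ M := by
        intro s hs
        obtain ⟨y, hy, rfl⟩ := Multiset.mem_map.mp hs
        rw [Finset.mem_val, Finset.mem_erase] at hy
        exact hboundA y (Finset.mem_inter.mp (hA''sub hy.2)).1 hy.1
      have hbSE : ∀ s ∈ SE, s ≤ M := by
        intro s hs
        obtain ⟨y, hy, rfl⟩ := Multiset.mem_map.mp hs
        rw [Finset.mem_val, Finset.mem_sdiff, Finset.mem_inter] at hy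
        exact hboundA y hy.1.1 (fun h => hy.2 (h ▸ huA''))
      have hka2 : k - a' = (k - b') + e := by omega
      rw [hTAsplit, hka2]
      have h1 := topsum_add_le hcSE (by omega : k - b' ≤ Multiset.card SA) hbSA hbSE
      have h2 : topsum (k - b') SA ≤ topsum (k - b') TB := hured
      have hc : ((a' : ℝ) + e) = (b' : ℝ) := by
        have : a' + e = b' := by omega
        exact_mod_cast congrArg (fun n : ℕ => (n : ℝ)) this
      have hm : (a' : ℝ) * M + (e : ℝ) * M = (b' : ℝ) * M := by
        rw [← add_mul, hc]
      linarith [h1, h2]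

theorem stmt8 {E : Type*} [DecidableEq E] [Fintype E] (w : E → ℝ) (d : E → E → ℝ)
    (hsymm : ∀ a b : E, a ≠ b → d a b = d b a)
    (hultra : ∀ a b c : E, a ≠ b → a ≠ c → b ≠ c → d a b ≤ max (d a c) (d b c))
    (r : ℕ) (A B : Finset E) (hcard : A.card = B.card + 1) :
    ∃ u ∈ A \ B,
      perR w d r A + perR w d r B ≤ perR w d r (A.erase u) + perR w d r (insert u B) := by
  have hABne : (A \ B).Nonempty := by
    rw [Finset.sdiff_nonempty]
    intro hsub
    have := Finset.card_le_card hsub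
    omega
  by_cases hr : B.card ≤ r
  · obtain ⟨u, hu⟩ := hABne
    obtain ⟨huA, huB⟩ := Finset.mem_sdiff.mp hu
    refine ⟨u, hu, ?_⟩
    rw [perR_erase hsymm hultra huA, perR_insert hsymm hultra huB,
      distR_of_card_le d u (by rw [Finset.card_erase_of_mem huA]; omega),
      distR_of_card_le d u hr]
    linarith
  · push_neg at hr
    obtain ⟨u, hu, htop⟩ := lemG hsymm hultra ((A ∪ B).card) A B le_rfl hcard
      (B.card - r) (by omega)
    obtain ⟨huA, huB⟩ := Finset.mem_sdiff.mp hu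
    refine ⟨u, hu, ?_⟩
    rw [perR_erase hsymm hultra huA, perR_insert hsymm hultra huB]
    have hce : (A.erase u).card = B.card := by rw [Finset.card_erase_of_mem huA]; omega
    have h1 : distR d r (A.erase u) u
        = topsum (B.card - r) ((A.erase u).val.map (d u)) := by
      rw [distR_eq_topsum d u (by rw [hce]; omega), hce]
    have h2 : distR d r B u = topsum (B.card - r) (B.val.map (d u)) :=
      distR_eq_topsum d u (by omega)
    rw [h1, h2]
    linarith [htop]
end

section
/- Let (E,w,d) be an ultra triple and let f = (f_n)_{n≥1} be a sequence of non-decreasing functions ℝ → ℝ. For a finite set C = {c_1,…,c_n} ⊆ E and x ∈ E \ C, define dist_f(C,x) := Σ_{i=1}^n f_i(d_i), where (d_1,…,d_n) is the list of distances d(c_1,x),…,d(c_n,x) arranged in non-decreasing order. Then dist_f satisfies property (S1): for any finite C ⊆ E and distinct x, y ∈ E \ C, dist_f(C,x) + dist_f(C ∪ {x}, y) = dist_f(C,y) + dist_f(C ∪ {y}, x). -/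
open Finset

noncomputable def gsum (f : ℕ → ℝ → ℝ) (k : ℕ) (l : List ℝ) : ℝ :=
  ∑ i ∈ Finset.range l.length, f (k + i + 1) (l.getD i 0)

lemma gsum_append (f : ℕ → ℝ → ℝ) (k : ℕ) (l1 l2 : List ℝ) :
    gsum f k (l1 ++ l2) = gsum f k l1 + gsum f (k + l1.length) l2 := by
  unfold gsum
  rw [List.length_append, Finset.sum_range_add]
  congr 1
  · exact Finset.sum_congr rfl fun i hi =>
      by rw [List.getD_append _ _ _ _ (Finset.mem_range.mp hi)]
  · exact Finset.sum_congr rfl fun i hi => by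
      rw [List.getD_append_right _ _ _ _ (Nat.le_add_right _ _), Nat.add_sub_cancel_left,
        ← Nat.add_assoc]

lemma gsum_replicate (f : ℕ → ℝ → ℝ) (k m : ℕ) (t : ℝ) :
    gsum f k (List.replicate m t) = ∑ i ∈ Finset.range m, f (k + i + 1) t := by
  unfold gsum
  rw [List.length_replicate]
  refine Finset.sum_congr rfl fun i hi => ?_
  rw [List.getD_eq_getElem _ _ (by simpa using Finset.mem_range.mp hi), List.getElem_replicate]

lemma decompM (M : Multiset ℝ) (t : ℝ) :
    M = M.filter (fun a => a < t) +
      (Multiset.replicate (M.count t) t + M.filter (fun a => t < a)) := by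
  ext b
  simp only [Multiset.count_add, Multiset.count_filter, Multiset.count_replicate]
  rcases lt_trichotomy b t with h | h | h
  · simp [h, h.ne, h.ne', asymm h]
  · simp [h, lt_irrefl]
  · simp [h, h.ne, h.ne', asymm h]

lemma sort_decomp (M : Multiset ℝ) (t : ℝ) :
    M.sort (· ≤ ·) = (M.filter (fun a => a < t)).sort (· ≤ ·) ++
      (List.replicate (M.count t) t ++ (M.filter (fun a => t < a)).sort (· ≤ ·)) := by
  have hs : List.Pairwise (· ≤ ·) ((M.filter (fun a => a < t)).sort (· ≤ ·) ++
      (List.replicate (M.count t) t ++ (M.filter (fun a => t < a)).sort (· ≤ ·))) := by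
    rw [List.pairwise_append, List.pairwise_append]
    refine ⟨Multiset.pairwise_sort _ _, ⟨by simp, Multiset.pairwise_sort _ _, ?_⟩, ?_⟩
    · intro a ha b hb
      have ha' : a = t := List.eq_of_mem_replicate ha
      have hb' : t < b := (Multiset.mem_filter.mp ((Multiset.mem_sort _).mp hb)).2
      rw [ha']; exact hb'.le
    · intro a ha b hb
      have ha' : a < t := (Multiset.mem_filter.mp ((Multiset.mem_sort _).mp ha)).2
      rcases List.mem_append.mp hb with hb | hb
      · rw [List.eq_of_mem_replicate hb]; exact ha'.le
      · have : t < b := (Multiset.mem_filter.mp ((Multiset.mem_sort _).mp hb)).2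
        exact (ha'.trans this).le
  refine List.Perm.eq_of_pairwise' (Multiset.pairwise_sort _ _) hs (Multiset.coe_eq_coe.mp ?_)
  rw [← Multiset.coe_add, ← Multiset.coe_add, Multiset.sort_eq, Multiset.sort_eq,
    Multiset.sort_eq, Multiset.coe_replicate]
  exact decompM M t

lemma distF_eq {E : Type*} [DecidableEq E] (d : E → E → ℝ) (f : ℕ → ℝ → ℝ)
    (C : Finset E) (x : E) :
    distF d f C x = gsum f 0 (Multiset.sort (C.val.map (fun c => d x c)) (· ≤ ·)) := by
  have h : (C.toList.map (fun c => d x c)).insertionSort (· ≤ ·)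
      = Multiset.sort (C.val.map (fun c => d x c)) (· ≤ ·) := by
    refine List.Perm.eq_of_pairwise' (List.pairwise_insertionSort _ _)
      (Multiset.pairwise_sort _ _) (Multiset.coe_eq_coe.mp ?_)
    rw [Multiset.sort_eq, Multiset.coe_eq_coe.mpr (List.perm_insertionSort _ _),
      ← Multiset.map_coe, Finset.coe_toList]
  simp only [distF, h, gsum, Nat.zero_add]



lemma core_exchange (f : ℕ → ℝ → ℝ) (t : ℝ) (A B : Multiset ℝ)
    (hW : A.filter (fun a => t < a) = B.filter (fun a => t < a))
    (hN : (A.filter (fun a => a < t)).card + A.count t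
        = (B.filter (fun a => a < t)).card + B.count t) :
    gsum f 0 (Multiset.sort A (· ≤ ·)) + gsum f 0 (Multiset.sort (t ::ₘ B) (· ≤ ·))
      = gsum f 0 (Multiset.sort B (· ≤ ·)) + gsum f 0 (Multiset.sort (t ::ₘ A) (· ≤ ·)) := by
  have hAlt : (t ::ₘ A).filter (fun a => a < t) = A.filter (fun a => a < t) :=
    Multiset.filter_cons_of_neg _ (lt_irrefl t)
  have hBlt : (t ::ₘ B).filter (fun a => a < t) = B.filter (fun a => a < t) :=
    Multiset.filter_cons_of_neg _ (lt_irrefl t)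
  have hAgt : (t ::ₘ A).filter (fun a => t < a) = A.filter (fun a => t < a) :=
    Multiset.filter_cons_of_neg _ (lt_irrefl t)
  have hBgt : (t ::ₘ B).filter (fun a => t < a) = B.filter (fun a => t < a) :=
    Multiset.filter_cons_of_neg _ (lt_irrefl t)
  rw [sort_decomp A t, sort_decomp B t, sort_decomp (t ::ₘ A) t, sort_decomp (t ::ₘ B) t,
    hAlt, hBlt, hAgt, hBgt, Multiset.count_cons_self, Multiset.count_cons_self, hW,
    gsum_append, gsum_append, gsum_append, gsum_append, gsum_append, gsum_append,
    gsum_append, gsum_append]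
  simp only [Multiset.length_sort, List.length_replicate, Nat.zero_add, gsum_replicate,
    Finset.sum_range_succ]
  set pA := (A.filter (fun a => a < t)).card with hpA
  set pB := (B.filter (fun a => a < t)).card with hpB
  set mA := A.count t with hmA
  set mB := B.count t with hmB
  obtain ⟨N, hNA⟩ : ∃ N, pA + mA = N := ⟨_, rfl⟩
  have hNB : pB + mB = N := by omega
  simp only [← Nat.add_assoc]
  rw [hNA, hNB]
  ring

theorem stmt10 {E : Type*} [DecidableEq E] (w : E → ℝ) (d : E → E → ℝ)
    (hsymm : ∀ a b : E, a ≠ b → d a b = d b a)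
    (hultra : ∀ a b c : E, a ≠ b → a ≠ c → b ≠ c → d a b ≤ max (d a c) (d b c))
    (f : ℕ → ℝ → ℝ) (hf : ∀ n, Monotone (f n))
    (C : Finset E) (x y : E) (hx : x ∉ C) (hy : y ∉ C) (hxy : x ≠ y) :
    distF d f C x + distF d f (insert x C) y =
      distF d f C y + distF d f (insert y C) x := by
  classical
  have key : ∀ c ∈ C, d x c = d y c ∨ (d x c < d y c ∧ d y c = d x y) ∨
      (d y c < d x c ∧ d x c = d x y) := by
    intro c hc
    have hxc : x ≠ c := fun h => hx (h ▸ hc)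
    have hyc : y ≠ c := fun h => hy (h ▸ hc)
    have h1 : d x y ≤ max (d x c) (d y c) := hultra x y c hxy hxc hyc
    have h2 : d x c ≤ max (d x y) (d y c) := by
      have h := hultra x c y hxc hxy (fun h => hyc h.symm)
      rwa [hsymm c y (fun h => hyc h.symm)] at h
    have h3 : d y c ≤ max (d x y) (d x c) := by
      have h := hultra y c x hyc hxy.symm (fun h => hxc h.symm)
      rwa [hsymm c x (fun h => hxc h.symm), hsymm y x hxy.symm] at h
    rcases lt_trichotomy (d x c) (d y c) with h | h | h
    · refine Or.inr (Or.inl ⟨h, le_antisymm ?_ ?_⟩)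
      · rcases le_max_iff.mp h3 with h' | h'
        · exact h'
        · exact absurd h' (not_le.mpr h)
      · calc d x y ≤ max (d x c) (d y c) := h1
          _ = d y c := max_eq_right h.le
    · exact Or.inl h
    · refine Or.inr (Or.inr ⟨h, le_antisymm ?_ ?_⟩)
      · rcases le_max_iff.mp h2 with h' | h'
        · exact h'
        · exact absurd h' (not_le.mpr h)
      · calc d x y ≤ max (d x c) (d y c) := h1
          _ = d x c := max_eq_left h.le
  have hmy : (insert x C).val.map (fun c => d y c) = d x y ::ₘ C.val.map (fun c => d y c) := by
    rw [Finset.insert_val_of_notMem hx, Multiset.map_cons, hsymm y x hxy.symm]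
  have hmx : (insert y C).val.map (fun c => d x c) = d x y ::ₘ C.val.map (fun c => d x c) := by
    rw [Finset.insert_val_of_notMem hy, Multiset.map_cons]
  rw [distF_eq, distF_eq, distF_eq, distF_eq, hmy, hmx]
  set t := d x y with ht
  set A := C.val.map (fun c => d x c) with hA
  set B := C.val.map (fun c => d y c) with hB
  have hW : A.filter (fun a => t < a) = B.filter (fun a => t < a) := by
    rw [hA, hB, Multiset.filter_map, Multiset.filter_map]
    have hfc : C.val.filter ((fun a => t < a) ∘ fun c => d x c)
        = C.val.filter ((fun a => t < a) ∘ fun c => d y c) := by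
      refine Multiset.filter_congr fun c hc => ?_
      simp only [Function.comp_apply]
      rcases key c hc with h | ⟨h1, h2⟩ | ⟨h1, h2⟩
      · rw [h]
      · rw [h2]
        exact ⟨fun h' => absurd (h'.trans (h2 ▸ h1)) (lt_irrefl t),
          fun h' => absurd h' (lt_irrefl t)⟩
      · rw [h2]
        exact ⟨fun h' => absurd h' (lt_irrefl t),
          fun h' => absurd (h'.trans (h2 ▸ h1)) (lt_irrefl t)⟩
    rw [hfc]
    refine Multiset.map_congr rfl fun c hc => ?_
    have hc2 := (Multiset.mem_filter.mp hc).2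
    simp only [Function.comp_apply] at hc2
    have hcC := (Multiset.mem_filter.mp hc).1
    rcases key c hcC with h | ⟨h1, h2⟩ | ⟨h1, h2⟩
    · exact h
    · exact absurd (h2 ▸ hc2) (lt_irrefl t)
    · exact absurd (hc2.trans (h2 ▸ h1)) (lt_irrefl t)
  have hN : (A.filter (fun a => a < t)).card + A.count t
      = (B.filter (fun a => a < t)).card + B.count t := by
    have hcA := congrArg Multiset.card (decompM A t)
    have hcB := congrArg Multiset.card (decompM B t)
    simp only [Multiset.card_add, Multiset.card_replicate] at hcA hcB
    have hAB : Multiset.card A = Multiset.card B := by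
      rw [hA, hB, Multiset.card_map, Multiset.card_map]
    have hw : (A.filter (fun a => t < a)).card = (B.filter (fun a => t < a)).card := by
      rw [hW]
    omega
  exact core_exchange f t A B hW hN
end

section
/- Let (E,w,d) be an ultra triple, r ≥ 0, and let C be a finite subset of E with |C| = t − 1 where t > r. Let x, y ∉ C be distinct. Color an index j 'red' if both d(x,c_j) > d(x,y) and d(y,c_j) > d(x,y); for red j one has d(x,c_j) = d(y,c_j). If fewer than t − r indices are red, then dist_r(C ∪ {x}, y) = dist_r(C, y) + d(x,y) and dist_r(C ∪ {y}, x) = dist_r(C, x) + d(x,y). -/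
open Finset

lemma distR_eq_max' {E : Type*} [DecidableEq E] (d : E → E → ℝ) (r : ℕ)
    (C : Finset E) (v : E) (n : ℕ) (hn : C.card - r = n) :
    distR d r C v = ((C.powersetCard n).image fun A => ∑ x ∈ A, d v x).max'
      ((Finset.powersetCard_nonempty.mpr (hn ▸ Nat.sub_le _ _)).image _) := by
  unfold distR
  by_cases h : C.card ≤ r
  · have hn0 : n = 0 := by omega
    subst hn0
    rw [if_pos h]
    refine le_antisymm (Finset.le_max' _ _ (Finset.mem_image.mpr ⟨∅,
      Finset.mem_powersetCard.mpr ⟨Finset.empty_subset _, Finset.card_empty⟩,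
      (Finset.sum_empty (f := fun a => d v a)).symm⟩)) (Finset.max'_le _ _ _ ?_)
    intro s hs
    obtain ⟨A, hA, rfl⟩ := Finset.mem_image.mp hs
    obtain ⟨-, hA2⟩ := Finset.mem_powersetCard.mp hA
    rw [Finset.card_eq_zero.mp hA2, Finset.sum_empty]
  · rw [if_neg h]
    subst hn
    have hset : {s : ℝ | ∃ A ⊆ C, A.card = C.card - r ∧ s = ∑ x ∈ A, d v x} =
        ↑((C.powersetCard (C.card - r)).image fun A => ∑ x ∈ A, d v x) := by
      ext s
      simp only [Set.mem_setOf_eq, Finset.coe_image, Set.mem_image, Finset.mem_coe,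
        Finset.mem_powersetCard]
      constructor
      · rintro ⟨A, h1, h2, h3⟩; exact ⟨A, ⟨h1, h2⟩, h3.symm⟩
      · rintro ⟨A, ⟨h1, h2⟩, h3⟩; exact ⟨A, h1, h2, h3.symm⟩
    rw [hset, Finset.Nonempty.csSup_eq_max']

lemma key {E : Type*} [DecidableEq E] (d : E → E → ℝ) (r t : ℕ) (hrt : r < t)
    (C : Finset E) (hC : C.card = t - 1) (x y : E) (hx : x ∉ C)
    (hyx : d y x = d x y)
    (hred : ∀ (P : Finset E) , P ⊆ C → (∀ c ∈ P, d x y < d y c) → P.card < t - r) :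
    distR d r (insert x C) y = distR d r C y + d x y := by
  classical
  have hxC : (insert x C).card = t := by
    rw [Finset.card_insert_of_notMem hx, hC]; omega
  rw [distR_eq_max' d r (insert x C) y (t - r) (by omega),
      distR_eq_max' d r C y (t - 1 - r) (by omega)]
  apply le_antisymm
  · apply Finset.max'_le
    intro s hs
    simp only [Finset.mem_image, Finset.mem_powersetCard] at hs
    obtain ⟨A, ⟨hA1, hA2⟩, rfl⟩ := hs
    by_cases hxA : x ∈ A
    · have hsub : A.erase x ⊆ C := by
        intro a ha
        have := hA1 (Finset.mem_of_mem_erase ha)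
        rcases Finset.mem_insert.mp this with h | h
        · exact absurd h (Finset.ne_of_mem_erase ha)
        · exact h
      have hcard : (A.erase x).card = t - 1 - r := by
        rw [Finset.card_erase_of_mem hxA, hA2]; omega
      calc ∑ a ∈ A, d y a = ∑ a ∈ A.erase x, d y a + d y x :=
            (Finset.sum_erase_add A _ hxA).symm
        _ ≤ _ + d x y := by
            rw [hyx]
            exact add_le_add_left (Finset.le_max'
              ((C.powersetCard (t - 1 - r)).image fun A => ∑ x ∈ A, d y x)
              (∑ a ∈ A.erase x, d y a) (Finset.mem_image.mpr ⟨A.erase x,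
              Finset.mem_powersetCard.mpr ⟨hsub, hcard⟩, rfl⟩)) _
    · have hAC : A ⊆ C := fun a ha => by
        rcases Finset.mem_insert.mp (hA1 ha) with h | h
        · exact absurd (h ▸ ha) hxA
        · exact h
      have : ∃ c ∈ A, ¬ d x y < d y c := by
        by_contra hcon
        push_neg at hcon
        have := hred A hAC hcon
        omega
      obtain ⟨c0, hc0A, hc0⟩ := this
      push_neg at hc0
      have hsub : A.erase c0 ⊆ C := (Finset.erase_subset _ _).trans hAC
      have hcard : (A.erase c0).card = t - 1 - r := by
        rw [Finset.card_erase_of_mem hc0A, hA2]; omega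
      calc ∑ a ∈ A, d y a = ∑ a ∈ A.erase c0, d y a + d y c0 :=
            (Finset.sum_erase_add A _ hc0A).symm
        _ ≤ _ + d x y := add_le_add (Finset.le_max'
              ((C.powersetCard (t - 1 - r)).image fun A => ∑ x ∈ A, d y x)
              (∑ a ∈ A.erase c0, d y a) (Finset.mem_image.mpr ⟨A.erase c0,
              Finset.mem_powersetCard.mpr ⟨hsub, hcard⟩, rfl⟩)) hc0
  · obtain ⟨B, hB, hBmax⟩ := Finset.mem_image.mp (Finset.max'_mem
      ((C.powersetCard (t - 1 - r)).image fun A => ∑ x ∈ A, d y x) _)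
    obtain ⟨hB1, hB2⟩ := Finset.mem_powersetCard.mp hB
    have hxB : x ∉ B := fun h => hx (hB1 h)
    apply Finset.le_max'
    refine Finset.mem_image.mpr ⟨insert x B, Finset.mem_powersetCard.mpr
      ⟨Finset.insert_subset_insert x hB1, by rw [Finset.card_insert_of_notMem hxB, hB2]; omega⟩, ?_⟩
    rw [Finset.sum_insert hxB, hyx, ← hBmax]
    ring

theorem stmt16 {E : Type*} [DecidableEq E] (w : E → ℝ) (d : E → E → ℝ)
    (hsymm : ∀ a b : E, a ≠ b → d a b = d b a)
    (hultra : ∀ a b c : E, a ≠ b → a ≠ c → b ≠ c → d a b ≤ max (d a c) (d b c))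
    (r t : ℕ) (hrt : r < t) (C : Finset E) (hC : C.card = t - 1)
    (x y : E) (hx : x ∉ C) (hy : y ∉ C) (hxy : x ≠ y)
    [DecidablePred fun cj => d x y < d x cj ∧ d x y < d y cj]
    (hred : (C.filter (fun cj => d x y < d x cj ∧ d x y < d y cj)).card < t - r) :
    distR d r (insert x C) y = distR d r C y + d x y ∧
      distR d r (insert y C) x = distR d r C x + d x y := by
  have hyx : d y x = d x y := hsymm y x hxy.symm
  have hsubcard : ∀ P ⊆ C, (∀ c ∈ P, d x y < d x c ∧ d x y < d y c) → P.card < t - r := by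
    intro P hP hPred
    have : P ⊆ C.filter (fun cj => d x y < d x cj ∧ d x y < d y cj) := fun c hc =>
      Finset.mem_filter.mpr ⟨hP hc, hPred c hc⟩
    exact lt_of_le_of_lt (Finset.card_le_card this) hred
  constructor
  · refine key d r t hrt C hC x y hx hyx ?_
    intro P hP hPred
    refine hsubcard P hP fun c hc => ⟨?_, hPred c hc⟩
    by_contra h
    push_neg at h
    have hcx : c ≠ x := fun he => hx (he ▸ hP hc)
    have hcy : c ≠ y := fun he => hy (he ▸ hP hc)
    have := hultra y c x hcy.symm hxy.symm hcx
    rw [hyx, hsymm c x hcx] at this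
    have : d y c ≤ d x y := this.trans (max_le le_rfl h)
    exact absurd (hPred c hc) (not_lt.mpr this)
  · have h2 := key d r t hrt C hC y x hy (hsymm x y hxy) ?_
    · rw [h2, hyx]
    intro P hP hPred
    refine hsubcard P hP fun c hc => ⟨by rw [← hyx]; exact hPred c hc, ?_⟩
    by_contra h
    push_neg at h
    have hcx : c ≠ x := fun he => hx (he ▸ hP hc)
    have hcy : c ≠ y := fun he => hy (he ▸ hP hc)
    have := hultra x c y hcx.symm hxy hcy
    rw [hsymm c y hcy] at this
    have : d x c ≤ d x y := this.trans (max_le le_rfl h)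
    exact absurd (hPred c hc) (not_lt.mpr (hyx ▸ this))
end
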